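/- Let F be a finite field with q elements, let m, n, T be positive integers, and set h = min(m,n). The capacity of the non-coherent matrix channel is bounded above by the logarithm of the number of subspaces of F^T of dimension at most h: C_m(n,m,T) ≤ ln( Σ_{i=0}^{h} |Gr_F(T,i)| ). -/

import Mathlib

open Finset

/- Mutual information (in nats) between two finite-valued random variables `U` and `V`
defined on a finite probability space with probability mass function `μ`. -/
open Classical in
noncomputable def mutualInfo {Ω A B : Type*} [Fintype Ω] (μ : Ω → ℝ) (U : Ω → A) (V : Ω → B) : ℝ :=
  ∑ ω : Ω, μ ω * Real.log
    ((∑ ω' : Ω, if U ω' = U ω ∧ V ω' = V ω then μ ω' else 0) /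
     ((∑ ω' : Ω, if U ω' = U ω then μ ω' else 0) * (∑ ω' : Ω, if V ω' = V ω then μ ω' else 0)))

/- The capacity of the non-coherent matrix channel `Y = G·X`, where the input `X` ranges
over `F^{m×T}` with an arbitrary pmf `p` and `G` is uniform on `F^{n×m}`, independent of `X`:
the supremum, over input distributions, of the mutual information `I(X;Y)`. -/
noncomputable def capacityM (F : Type) [Field F] [Fintype F] (n m T : ℕ) : ℝ :=
  sSup { I : ℝ | ∃ p : Matrix (Fin m) (Fin T) F → ℝ,
    (∀ x, 0 ≤ p x) ∧ (∑ x, p x = 1) ∧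
    I = mutualInfo
        (fun ω : Matrix (Fin m) (Fin T) F × Matrix (Fin n) (Fin m) F =>
          p ω.1 / (Fintype.card (Matrix (Fin n) (Fin m) F) : ℝ))
        (fun ω => ω.1) (fun ω => ω.2 * ω.1) }

/- `grCard F N d` is the number of `d`-dimensional `F`-linear subspaces of `F^N`. -/
noncomputable def grCard (F : Type) [Field F] [Fintype F] (N d : ℕ) : ℕ :=
  Nat.card {W : Submodule F (Fin N → F) // Module.finrank F ↥W = d}

/-! ### Auxiliary definitions and lemmas -/

section Aux

open Classical

set_option linter.unusedSectionVars false

variable {F : Type} [Field F] [Fintype F] {m n T : ℕ}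

/-- Row space of a matrix. -/
noncomputable def rsp {r : ℕ} (y : Matrix (Fin r) (Fin T) F) : Submodule F (Fin T → F) :=
  Submodule.span F (Set.range y)

lemma rsp_mul_le (g : Matrix (Fin n) (Fin m) F) (x : Matrix (Fin m) (Fin T) F) :
    rsp (g * x) ≤ rsp x := by
  rw [rsp, Submodule.span_le]
  rintro - ⟨i, rfl⟩
  have : (g * x) i = ∑ k, g i k • x k := by
    funext j
    simp [Matrix.mul_apply, Finset.sum_apply]
  rw [this]
  exact Submodule.sum_mem _ fun k _ =>
    Submodule.smul_mem _ _ (Submodule.subset_span ⟨k, rfl⟩)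

lemma exists_of_rsp_le {x : Matrix (Fin m) (Fin T) F} {y : Matrix (Fin n) (Fin T) F}
    (h : rsp y ≤ rsp x) : ∃ g : Matrix (Fin n) (Fin m) F, g * x = y := by
  have hrow : ∀ i, ∃ c : Fin m → F, ∑ k, c k • x k = y i := by
    intro i
    exact (Submodule.mem_span_range_iff_exists_fun F).1 (h (Submodule.subset_span ⟨i, rfl⟩))
  choose c hc using hrow
  refine ⟨Matrix.of fun i k => c i k, ?_⟩
  funext i j
  have := congrFun (hc i) j
  simpa [Matrix.mul_apply, Finset.sum_apply] using this

lemma finrank_rsp_le {r : ℕ} (y : Matrix (Fin r) (Fin T) F) :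
    Module.finrank F (rsp y) ≤ r := by
  classical
  refine le_trans (finrank_span_le_card (Set.range y)) ?_
  have : (Set.range y).toFinset = Finset.univ.image y := by
    ext a; simp
    exact ⟨fun ⟨i, hi⟩ => Finset.mem_image.2 ⟨i, Finset.mem_univ _, hi⟩,
      fun h => by obtain ⟨i, -, hi⟩ := Finset.mem_image.1 h; exact ⟨i, hi⟩⟩
  rw [this]
  exact le_trans Finset.card_image_le (by simp)

/-- Number of matrices `g` with `g * x = y`. -/
noncomputable def cnt (x : Matrix (Fin m) (Fin T) F) (y : Matrix (Fin n) (Fin T) F) : ℕ :=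
  #(univ.filter fun g : Matrix (Fin n) (Fin m) F => g * x = y)

/-- Number of matrices `g` such that the row space of `g * x` is `v`. -/
noncomputable def ddc (n : ℕ) (x : Matrix (Fin m) (Fin T) F) (v : Submodule F (Fin T → F)) : ℕ :=
  #(univ.filter fun g : Matrix (Fin n) (Fin m) F => rsp (g * x) = v)

/-- Number of `n × T` matrices with row space `v`. -/
noncomputable def Ncnt (n T : ℕ) (F : Type) [Field F] [Fintype F]
    (v : Submodule F (Fin T → F)) : ℕ :=
  #(univ.filter fun y : Matrix (Fin n) (Fin T) F => rsp y = v)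

lemma cnt_congr {x : Matrix (Fin m) (Fin T) F} {y y' : Matrix (Fin n) (Fin T) F}
    (h : rsp y = rsp y') : cnt x y = cnt x y' := by
  by_cases hy : ∃ g₀ : Matrix (Fin n) (Fin m) F, g₀ * x = y
  · obtain ⟨g₀, hg₀⟩ := hy
    have hle : rsp y' ≤ rsp x := by
      rw [← h, ← hg₀]; exact rsp_mul_le g₀ x
    obtain ⟨g₁, hg₁⟩ := exists_of_rsp_le hle
    refine Finset.card_bij' (fun g _ => g - g₀ + g₁) (fun g _ => g - g₁ + g₀) ?_ ?_ ?_ ?_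
    · intro g hg
      simp only [mem_filter, mem_univ, true_and] at hg ⊢
      rw [Matrix.add_mul, Matrix.sub_mul, hg, hg₀, hg₁]
      abel
    · intro g hg
      simp only [mem_filter, mem_univ, true_and] at hg ⊢
      rw [Matrix.add_mul, Matrix.sub_mul, hg, hg₀, hg₁]
      abel
    · intro g _
      abel
    · intro g _
      abel
  · have hy' : ¬ ∃ g : Matrix (Fin n) (Fin m) F, g * x = y' := by
      rintro ⟨g, rfl⟩
      exact hy (exists_of_rsp_le (by rw [h]; exact rsp_mul_le g x))
    rw [cnt, cnt, Finset.filter_false_of_mem, Finset.filter_false_of_mem]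
    · intro g _ hg; exact hy' ⟨g, hg⟩
    · intro g _ hg; exact hy ⟨g, hg⟩

lemma ddc_eq {x : Matrix (Fin m) (Fin T) F} {y : Matrix (Fin n) (Fin T) F}
    {v : Submodule F (Fin T → F)} (hv : rsp y = v) :
    ddc n x v = Ncnt n T F v * cnt x y := by
  have key : ddc n x v = ∑ y' ∈ univ.filter (fun y' : Matrix (Fin n) (Fin T) F => rsp y' = v),
      cnt x y' := by
    rw [ddc]
    rw [Finset.card_eq_sum_card_fiberwise (f := fun g : Matrix (Fin n) (Fin m) F => g * x)
      (t := univ.filter fun y' : Matrix (Fin n) (Fin T) F => rsp y' = v)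
      (fun g hg => by simp only [Finset.mem_coe, mem_filter, mem_univ, true_and] at hg ⊢; exact hg)]
    refine Finset.sum_congr rfl fun y' hy' => ?_
    simp only [mem_filter, mem_univ, true_and] at hy'
    congr 1
    ext g
    simp only [mem_filter, mem_univ, true_and]
    constructor
    · rintro ⟨-, h2⟩; exact h2
    · rintro h2; exact ⟨by rw [h2, hy'], h2⟩
  rw [key, Finset.sum_congr rfl (fun y' hy' => cnt_congr (x := x)
    (show rsp y' = rsp y by
      simp only [mem_filter, mem_univ, true_and] at hy'
      rw [hy', hv])), Finset.sum_const, smul_eq_mul]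
  rfl

lemma cnt_mul_Ncnt_le {x : Matrix (Fin m) (Fin T) F} {y : Matrix (Fin n) (Fin T) F}
    {v : Submodule F (Fin T → F)} (hv : rsp y = v) :
    cnt x y * Ncnt n T F v ≤ Fintype.card (Matrix (Fin n) (Fin m) F) := by
  rw [mul_comm, ← ddc_eq hv, ddc]
  exact le_trans (Finset.card_filter_le _ _) (by simp)

lemma cnt_dd_le (x x' : Matrix (Fin m) (Fin T) F) (y : Matrix (Fin n) (Fin T) F) :
    cnt x y * ddc n x' (rsp y) ≤ Fintype.card (Matrix (Fin n) (Fin m) F) * cnt x' y := by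
  rw [ddc_eq rfl, ← mul_assoc]
  exact Nat.mul_le_mul_right _ (cnt_mul_Ncnt_le rfl)

lemma sum_grCard (h : ℕ) :
    letI : Fintype (Submodule F (Fin T → F)) := Fintype.ofFinite _
    ∑ i ∈ Finset.range (h + 1), grCard F T i
      = #(univ.filter fun W : Submodule F (Fin T → F) => Module.finrank F ↥W ≤ h) := by
  letI : Fintype (Submodule F (Fin T → F)) := Fintype.ofFinite _
  rw [Finset.card_eq_sum_card_fiberwise (f := fun W : Submodule F (Fin T → F) => Module.finrank F ↥W)
    (t := Finset.range (h + 1)) (fun W hW => by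
      simp only [Finset.mem_coe, mem_filter, mem_univ, true_and] at hW
      simpa [Nat.lt_succ_iff] using hW)]
  refine Finset.sum_congr rfl fun i hi => ?_
  simp only [Finset.mem_range, Nat.lt_succ_iff] at hi
  rw [grCard, Nat.card_eq_fintype_card, Fintype.card_subtype]
  congr 1
  ext W
  simp only [Finset.mem_filter, Finset.mem_univ, true_and]
  exact ⟨fun h2 => ⟨le_trans (le_of_eq h2) hi, h2⟩, fun h2 => h2.2⟩

lemma one_le_grCard_zero : 1 ≤ grCard F T 0 := by
  have : Nonempty {W : Submodule F (Fin T → F) // Module.finrank F ↥W = 0} :=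
    ⟨⟨⊥, finrank_bot F _⟩⟩
  have : 0 < grCard F T 0 := Nat.card_pos
  omega

end Aux

/-- The capacity of the non-coherent matrix channel is at most the logarithm of the
number of subspaces of `F^T` of dimension at most `h = min m n`. -/
theorem capacity_le_log_sphere (F : Type) [Field F] [Fintype F] (m n T : ℕ)
    (hm : 0 < m) (hn : 0 < n) (hT : 0 < T) :
    capacityM F n m T ≤ Real.log (∑ i ∈ Finset.range (min m n + 1), (grCard F T i : ℝ)) := by
  classical
  letI instSub : Fintype (Submodule F (Fin T → F)) := Fintype.ofFinite _
  set K : ℝ := ∑ i ∈ Finset.range (min m n + 1), (grCard F T i : ℝ) with hKdef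
  have hKcard : K = (#(univ.filter fun W : Submodule F (Fin T → F) =>
      Module.finrank F ↥W ≤ min m n) : ℝ) := by
    have hgr : ∑ i ∈ Finset.range (min m n + 1), grCard F T i
        = #(univ.filter fun W : Submodule F (Fin T → F) =>
            Module.finrank F ↥W ≤ min m n) := sum_grCard (min m n)
    rw [hKdef, ← Nat.cast_sum, hgr]
  have hK1 : (1 : ℝ) ≤ K := by
    rw [hKdef]
    calc (1:ℝ) ≤ (grCard F T 0 : ℝ) := by exact_mod_cast one_le_grCard_zero
    _ ≤ _ := Finset.single_le_sum (f := fun i => (grCard F T i : ℝ))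
        (fun i _ => by positivity) (Finset.mem_range.2 (Nat.succ_pos _))
  have hK0 : (0:ℝ) < K := lt_of_lt_of_le one_pos hK1
  refine Real.sSup_le ?_ (Real.log_nonneg hK1)
  rintro I ⟨p, hp0, hp1, rfl⟩
  simp only [mutualInfo]
  set M : ℝ := (Fintype.card (Matrix (Fin n) (Fin m) F) : ℝ) with hMdef
  have hM0 : (0:ℝ) < M := by
    rw [hMdef]; exact_mod_cast Fintype.card_pos
  set Q : Submodule F (Fin T → F) → ℝ := fun v =>
    ∑ ω : Matrix (Fin m) (Fin T) F × Matrix (Fin n) (Fin m) F,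
      if rsp (ω.2 * ω.1) = v then p ω.1 / M else 0 with hQdef
  have hQ : ∀ v, Q v = ∑ x' : Matrix (Fin m) (Fin T) F, (ddc n x' v : ℝ) * (p x' / M) := by
    intro v
    rw [hQdef]
    dsimp only
    rw [Fintype.sum_prod_type]
    refine Finset.sum_congr rfl fun x' _ => ?_
    dsimp only
    rw [Finset.sum_ite, Finset.sum_const, Finset.sum_const, smul_zero, add_zero, nsmul_eq_mul, ddc]
  have hQnonneg : ∀ v, 0 ≤ Q v := by
    intro v
    rw [hQdef]
    dsimp only
    refine Finset.sum_nonneg fun ω _ => ?_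
    split
    · exact div_nonneg (hp0 _) hM0.le
    · exact le_rfl
  have hμsum : (∑ ω : Matrix (Fin m) (Fin T) F × Matrix (Fin n) (Fin m) F, p ω.1 / M) = 1 := by
    rw [Fintype.sum_prod_type]
    have : ∀ x : Matrix (Fin m) (Fin T) F,
        (∑ _g : Matrix (Fin n) (Fin m) F, p x / M) = p x := by
      intro x
      rw [Finset.sum_const, nsmul_eq_mul, Finset.card_univ, ← hMdef]
      field_simp
    rw [Finset.sum_congr rfl fun x _ => this x]
    exact hp1
  have hrank : ∀ (x : Matrix (Fin m) (Fin T) F) (g : Matrix (Fin n) (Fin m) F),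
      Module.finrank F (rsp (g * x)) ≤ min m n :=
    fun x g => le_min (le_trans (Submodule.finrank_mono (rsp_mul_le g x)) (finrank_rsp_le x))
      (finrank_rsp_le (g * x))
  -- the second sum bound
  have hsum2 : (∑ ω : Matrix (Fin m) (Fin T) F × Matrix (Fin n) (Fin m) F,
      (p ω.1 / M) * (1 / (K * Q (rsp (ω.2 * ω.1))))) ≤ 1 := by
    set T₀ : Finset (Submodule F (Fin T → F)) :=
      univ.image (fun ω : Matrix (Fin m) (Fin T) F × Matrix (Fin n) (Fin m) F =>
        rsp (ω.2 * ω.1)) with hT₀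
    rw [← Finset.sum_fiberwise_of_maps_to (t := T₀)
      (g := fun ω : Matrix (Fin m) (Fin T) F × Matrix (Fin n) (Fin m) F => rsp (ω.2 * ω.1))
      (fun ω _ => Finset.mem_image_of_mem _ (Finset.mem_univ ω))]
    have hfiber : ∀ v ∈ T₀,
        (∑ ω ∈ univ.filter (fun ω : Matrix (Fin m) (Fin T) F × Matrix (Fin n) (Fin m) F =>
          rsp (ω.2 * ω.1) = v), (p ω.1 / M) * (1 / (K * Q (rsp (ω.2 * ω.1))))) ≤ 1 / K := by
      intro v hv
      have h1 : ∀ ω ∈ univ.filter (fun ω : Matrix (Fin m) (Fin T) F × Matrix (Fin n) (Fin m) F =>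
          rsp (ω.2 * ω.1) = v),
          (p ω.1 / M) * (1 / (K * Q (rsp (ω.2 * ω.1)))) = (p ω.1 / M) * (1 / (K * Q v)) := by
        intro ω hω
        simp only [mem_filter, mem_univ, true_and] at hω
        rw [hω]
      rw [Finset.sum_congr rfl h1, ← Finset.sum_mul]
      have h2 : (∑ ω ∈ univ.filter
          (fun ω : Matrix (Fin m) (Fin T) F × Matrix (Fin n) (Fin m) F =>
            rsp (ω.2 * ω.1) = v), p ω.1 / M) = Q v := by
        rw [hQdef]
        dsimp only
        rw [Finset.sum_filter]
      rw [h2]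
      rcases eq_or_lt_of_le (hQnonneg v) with hq | hq
      · rw [← hq, zero_mul]
        exact le_of_lt (div_pos one_pos hK0)
      · rw [mul_one_div, div_le_div_iff₀ (mul_pos hK0 hq) hK0, one_mul]
        exact le_of_eq (mul_comm _ _)
    calc (∑ v ∈ T₀, ∑ ω ∈ univ.filter
          (fun ω : Matrix (Fin m) (Fin T) F × Matrix (Fin n) (Fin m) F =>
            rsp (ω.2 * ω.1) = v), (p ω.1 / M) * (1 / (K * Q (rsp (ω.2 * ω.1)))))
        ≤ ∑ _v ∈ T₀, 1 / K := Finset.sum_le_sum hfiber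
    _ = (T₀.card : ℝ) * (1 / K) := by rw [Finset.sum_const, nsmul_eq_mul]
    _ ≤ K * (1 / K) := by
        refine mul_le_mul_of_nonneg_right ?_ (by positivity)
        rw [hKcard]
        have hsub : T₀ ⊆ univ.filter fun W : Submodule F (Fin T → F) =>
            Module.finrank F ↥W ≤ min m n := by
          intro v hv
          rw [hT₀, Finset.mem_image] at hv
          obtain ⟨ω, -, rfl⟩ := hv
          simp only [mem_filter, mem_univ, true_and]
          exact hrank ω.1 ω.2
        exact_mod_cast Finset.card_le_card hsub
    _ = 1 := by field_simp
  -- termwise bound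
  have hterm : ∀ ω : Matrix (Fin m) (Fin T) F × Matrix (Fin n) (Fin m) F,
      (p ω.1 / M) * Real.log
        ((∑ ω' : Matrix (Fin m) (Fin T) F × Matrix (Fin n) (Fin m) F,
            if ω'.1 = ω.1 ∧ ω'.2 * ω'.1 = ω.2 * ω.1 then p ω'.1 / M else 0) /
          ((∑ ω' : Matrix (Fin m) (Fin T) F × Matrix (Fin n) (Fin m) F,
            if ω'.1 = ω.1 then p ω'.1 / M else 0) *
           (∑ ω' : Matrix (Fin m) (Fin T) F × Matrix (Fin n) (Fin m) F,
            if ω'.2 * ω'.1 = ω.2 * ω.1 then p ω'.1 / M else 0)))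
      ≤ (p ω.1 / M) * Real.log K + (p ω.1 / M) * (1 / (K * Q (rsp (ω.2 * ω.1)))) - p ω.1 / M := by
    rintro ⟨x, g⟩
    dsimp only
    by_cases hp : p x = 0
    · rw [hp]
      simp
    have hpx : 0 < p x := lt_of_le_of_ne (hp0 x) (Ne.symm hp)
    set y : Matrix (Fin n) (Fin T) F := g * x with hy
    set v : Submodule F (Fin T → F) := rsp y with hv
    -- the three sums
    have hJ : (∑ ω' : Matrix (Fin m) (Fin T) F × Matrix (Fin n) (Fin m) F,
        if ω'.1 = x ∧ ω'.2 * ω'.1 = y then p ω'.1 / M else 0)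
        = (cnt x y : ℝ) * (p x / M) := by
      rw [Fintype.sum_prod_type]
      rw [Finset.sum_eq_single x]
      · dsimp only
        rw [Finset.sum_ite, Finset.sum_const, Finset.sum_const, smul_zero, add_zero,
          nsmul_eq_mul, cnt]
        congr 1
        have : (Finset.filter (fun g' : Matrix (Fin n) (Fin m) F => x = x ∧ g' * x = y) univ)
            = Finset.filter (fun g' : Matrix (Fin n) (Fin m) F => g' * x = y) univ := by
          ext g'; simp
        rw [this]
      · intro x' _ hx'
        apply Finset.sum_eq_zero
        intro g' _
        rw [if_neg]
        rintro ⟨rfl, -⟩; exact hx' rfl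
      · simp
    have hPU : (∑ ω' : Matrix (Fin m) (Fin T) F × Matrix (Fin n) (Fin m) F,
        if ω'.1 = x then p ω'.1 / M else 0) = M * (p x / M) := by
      rw [Fintype.sum_prod_type]
      rw [Finset.sum_eq_single x]
      · simp [hMdef, mul_comm]
      · intro x' _ hx'
        apply Finset.sum_eq_zero
        intro g' _
        exact if_neg hx'
      · simp
    have hPV : (∑ ω' : Matrix (Fin m) (Fin T) F × Matrix (Fin n) (Fin m) F,
        if ω'.2 * ω'.1 = y then p ω'.1 / M else 0)
        = ∑ x' : Matrix (Fin m) (Fin T) F, (cnt x' y : ℝ) * (p x' / M) := by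
      rw [Fintype.sum_prod_type]
      refine Finset.sum_congr rfl fun x' _ => ?_
      dsimp only
      rw [Finset.sum_ite, Finset.sum_const, Finset.sum_const, smul_zero, add_zero,
        nsmul_eq_mul, cnt]
    rw [hJ, hPU, hPV]
    -- positivity facts
    have hcnt1 : 0 < cnt x y := by
      rw [cnt]
      refine Finset.card_pos.2 ⟨g, ?_⟩
      simp [hy]
    have hJpos : 0 < (cnt x y : ℝ) * (p x / M) := by
      have : (0:ℝ) < (cnt x y : ℝ) := by exact_mod_cast hcnt1
      exact mul_pos this (div_pos hpx hM0)
    have hPVpos : 0 < ∑ x' : Matrix (Fin m) (Fin T) F, (cnt x' y : ℝ) * (p x' / M) := by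
      refine Finset.sum_pos' (fun x' _ => ?_) ⟨x, Finset.mem_univ x, hJpos⟩
      exact mul_nonneg (Nat.cast_nonneg _) (div_nonneg (hp0 x') hM0.le)
    have hddc1 : 0 < ddc n x v := by
      rw [ddc]
      refine Finset.card_pos.2 ⟨g, ?_⟩
      simp [hv, hy]
    have hQpos : 0 < Q v := by
      rw [hQ v]
      refine Finset.sum_pos' (fun x' _ => ?_) ⟨x, Finset.mem_univ x, ?_⟩
      · exact mul_nonneg (Nat.cast_nonneg _) (div_nonneg (hp0 x') hM0.le)
      · have : (0:ℝ) < (ddc n x v : ℝ) := by exact_mod_cast hddc1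
        exact mul_pos this (div_pos hpx hM0)
    have hPUpos : 0 < M * (p x / M) := mul_pos hM0 (div_pos hpx hM0)
    -- key inequality J * Q v ≤ PU * PV
    have hkey : ((cnt x y : ℝ) * (p x / M)) * Q v
        ≤ (M * (p x / M)) * ∑ x' : Matrix (Fin m) (Fin T) F, (cnt x' y : ℝ) * (p x' / M) := by
      rw [hQ v, Finset.mul_sum, Finset.mul_sum]
      refine Finset.sum_le_sum fun x' _ => ?_
      have hnat : ((cnt x y : ℝ) * (ddc n x' v : ℝ)) ≤ M * (cnt x' y : ℝ) := by
        rw [hMdef]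
        exact_mod_cast cnt_dd_le x x' y
      have e1 : (cnt x y : ℝ) * (p x / M) * ((ddc n x' v : ℝ) * (p x' / M))
          = ((cnt x y : ℝ) * (ddc n x' v : ℝ)) * ((p x / M) * (p x' / M)) := by ring
      have e2 : M * (p x / M) * ((cnt x' y : ℝ) * (p x' / M))
          = (M * (cnt x' y : ℝ)) * ((p x / M) * (p x' / M)) := by ring
      rw [e1, e2]
      exact mul_le_mul_of_nonneg_right hnat
        (mul_nonneg (div_nonneg (hp0 x) hM0.le) (div_nonneg (hp0 x') hM0.le))
    -- the ratio is at most 1 / Q v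
    have hratio : ((cnt x y : ℝ) * (p x / M)) /
        ((M * (p x / M)) * ∑ x' : Matrix (Fin m) (Fin T) F, (cnt x' y : ℝ) * (p x' / M))
        ≤ 1 / Q v := by
      rw [div_le_div_iff₀ (mul_pos hPUpos hPVpos) hQpos, one_mul]
      exact hkey
    have hargpos : 0 < ((cnt x y : ℝ) * (p x / M)) /
        ((M * (p x / M)) * ∑ x' : Matrix (Fin m) (Fin T) F, (cnt x' y : ℝ) * (p x' / M)) :=
      div_pos hJpos (mul_pos hPUpos hPVpos)
    have hlog1 : Real.log (((cnt x y : ℝ) * (p x / M)) /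
        ((M * (p x / M)) * ∑ x' : Matrix (Fin m) (Fin T) F, (cnt x' y : ℝ) * (p x' / M)))
        ≤ Real.log (1 / Q v) := Real.log_le_log hargpos hratio
    have hKQ : 0 < K * Q v := mul_pos hK0 hQpos
    have hsplit : (1 : ℝ) / Q v = K * (1 / (K * Q v)) := by
      rw [mul_one_div]
      rw [eq_div_iff (ne_of_gt hKQ), one_div, inv_mul_eq_div, div_eq_iff (ne_of_gt hQpos)]
    have hlog2 : Real.log (1 / Q v) = Real.log K + Real.log (1 / (K * Q v)) := by
      rw [hsplit, Real.log_mul (ne_of_gt hK0) (ne_of_gt (div_pos one_pos hKQ))]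
    have hlog3 : Real.log (1 / (K * Q v)) ≤ 1 / (K * Q v) - 1 :=
      Real.log_le_sub_one_of_pos (div_pos one_pos hKQ)
    have hfinal : Real.log (((cnt x y : ℝ) * (p x / M)) /
        ((M * (p x / M)) * ∑ x' : Matrix (Fin m) (Fin T) F, (cnt x' y : ℝ) * (p x' / M)))
        ≤ Real.log K + (1 / (K * Q v) - 1) := by
      calc _ ≤ Real.log (1 / Q v) := hlog1
      _ = Real.log K + Real.log (1 / (K * Q v)) := hlog2
      _ ≤ Real.log K + (1 / (K * Q v) - 1) := by linarith
    have hμnn : 0 ≤ p x / M := div_nonneg (hp0 x) hM0.le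
    calc (p x / M) * Real.log (((cnt x y : ℝ) * (p x / M)) /
        ((M * (p x / M)) * ∑ x' : Matrix (Fin m) (Fin T) F, (cnt x' y : ℝ) * (p x' / M)))
        ≤ (p x / M) * (Real.log K + (1 / (K * Q v) - 1)) :=
          mul_le_mul_of_nonneg_left hfinal hμnn
    _ = (p x / M) * Real.log K + (p x / M) * (1 / (K * Q v)) - p x / M := by ring
  -- put everything together
  calc (∑ ω : Matrix (Fin m) (Fin T) F × Matrix (Fin n) (Fin m) F,
      (p ω.1 / M) * Real.log
        ((∑ ω' : Matrix (Fin m) (Fin T) F × Matrix (Fin n) (Fin m) F,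
            if ω'.1 = ω.1 ∧ ω'.2 * ω'.1 = ω.2 * ω.1 then p ω'.1 / M else 0) /
          ((∑ ω' : Matrix (Fin m) (Fin T) F × Matrix (Fin n) (Fin m) F,
            if ω'.1 = ω.1 then p ω'.1 / M else 0) *
           (∑ ω' : Matrix (Fin m) (Fin T) F × Matrix (Fin n) (Fin m) F,
            if ω'.2 * ω'.1 = ω.2 * ω.1 then p ω'.1 / M else 0))))
      ≤ ∑ ω : Matrix (Fin m) (Fin T) F × Matrix (Fin n) (Fin m) F,
        ((p ω.1 / M) * Real.log K + (p ω.1 / M) * (1 / (K * Q (rsp (ω.2 * ω.1)))) - p ω.1 / M) :=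
      Finset.sum_le_sum fun ω _ => hterm ω
  _ = (∑ ω : Matrix (Fin m) (Fin T) F × Matrix (Fin n) (Fin m) F, p ω.1 / M) * Real.log K
      + (∑ ω : Matrix (Fin m) (Fin T) F × Matrix (Fin n) (Fin m) F,
          (p ω.1 / M) * (1 / (K * Q (rsp (ω.2 * ω.1)))))
      - ∑ ω : Matrix (Fin m) (Fin T) F × Matrix (Fin n) (Fin m) F, p ω.1 / M := by
      rw [Finset.sum_sub_distrib, Finset.sum_add_distrib, ← Finset.sum_mul]
  _ ≤ 1 * Real.log K + 1 - 1 := by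
      rw [hμsum]
      linarith [hsum2]
  _ = Real.log K := by ring
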